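/- Let K be a field and V a finite-dimensional K-vector space. Let φ be a K-algebra endomorphism of the exterior algebra Λ(V) such that φ maps the ideal generated by V into itself, and such that the induced linear endomorphism of V ≅ (augmentation ideal)/(augmentation ideal)² is bijective. Then φ is bijective. -/
import Mathlib

section Aux

variable {K V : Type*} [Field K] [AddCommGroup V] [Module K V] [FiniteDimensional K V]

open ExteriorAlgebra Submodule

/-- The sup of all exterior powers is the whole exterior algebra. -/
lemma aux_iSup_top : (⨆ i : ℕ, (⋀[K]^i V)) = ⊤ :=
  (DirectSum.Decomposition.isInternal fun i : ℕ => (⋀[K]^i V)).submodule_iSup_eq_top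

/-- Exterior powers above the dimension vanish. -/
lemma aux_pow_bot : (⋀[K]^(Module.finrank K V + 1) V) = ⊥ := by
  rw [← ExteriorAlgebra.ιMulti_span_fixedDegree, Submodule.span_eq_bot]
  rintro x ⟨v, rfl⟩
  apply AlternatingMap.map_linearDependent
  intro h
  have := h.fintype_card_le_finrank
  simp [Fintype.card_fin] at this

lemma aux_pow_bot' (i : ℕ) (hi : Module.finrank K V + 1 ≤ i) :
    (⋀[K]^i V) = ⊥ := by
  obtain ⟨j, rfl⟩ := Nat.exists_eq_add_of_le hi
  rw [exteriorPower, pow_add, ← exteriorPower, aux_pow_bot, Submodule.bot_mul]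

/-- Monotonicity of submodule powers. -/
lemma aux_powMono {A : Type*} [Ring A] [Algebra K A] {M N : Submodule K A}
    (h : M ≤ N) : ∀ k, M ^ k ≤ N ^ k := by
  intro k
  induction k with
  | zero => simp
  | succ k ih =>
    rw [pow_succ, pow_succ]
    exact mul_le_mul' ih h

/-- The exterior algebra of a finite-dimensional space is finite-dimensional. -/
lemma aux_findim : FiniteDimensional K (ExteriorAlgebra K V) := by
  set n := Module.finrank K V
  have hfg : (⊤ : Submodule K (ExteriorAlgebra K V)).FG := by
    have htop : (⊤ : Submodule K (ExteriorAlgebra K V)) =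
        (Finset.range (n + 2)).sup fun i => (⋀[K]^i V) := by
      refine le_antisymm ?_ le_top
      rw [← aux_iSup_top]
      refine iSup_le fun i => ?_
      by_cases hi : i < n + 2
      · exact Finset.le_sup (Finset.mem_range.mpr hi)
      · rw [aux_pow_bot' i (by omega)]
        exact bot_le
    rw [htop]
    apply Submodule.fg_finset_sup
    intro i _
    have hJ : (LinearMap.range (ι K : V →ₗ[K] ExteriorAlgebra K V)).FG := by
      rw [← Submodule.map_top]
      exact Submodule.FG.map _ (Module.finite_def.mp inferInstance)
    exact hJ.pow i
  exact ⟨hfg⟩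

end Aux

open ExteriorAlgebra Submodule

set_option maxHeartbeats 1600000 in
/-- An algebra endomorphism of an exterior algebra on a finite-dimensional
space which preserves the (two-sided) ideal I generated by V and induces a
bijection on I/I² ≅ V is bijective. -/
theorem stmt_11 {K V : Type*} [Field K] [AddCommGroup V] [Module K V]
    [FiniteDimensional K V]
    (φ : ExteriorAlgebra K V →ₐ[K] ExteriorAlgebra K V)
    (I : Submodule K (ExteriorAlgebra K V))
    (hI : I = Submodule.span K {z : ExteriorAlgebra K V |
      ∃ x : ExteriorAlgebra K V, ∃ v : V, ∃ y : ExteriorAlgebra K V,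
        z = x * ExteriorAlgebra.ι K v * y})
    (hφI : ∀ x ∈ I, φ x ∈ I)
    (φ₁ : V →ₗ[K] V)
    (hφ₁ : ∀ v : V,
      φ (ExteriorAlgebra.ι K v) - ExteriorAlgebra.ι K (φ₁ v) ∈ I * I)
    (hbij : Function.Bijective φ₁) :
    Function.Bijective φ := by
  classical
  set n := Module.finrank K V with hn
  set J : Submodule K (ExteriorAlgebra K V) :=
    LinearMap.range (ι K : V →ₗ[K] ExteriorAlgebra K V) with hJdef
  have hJpow : ∀ i : ℕ, (J ^ i) = (⋀[K]^i V) := fun i => rfl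
  -- I is a two-sided ideal
  have hImulL : ∀ a : ExteriorAlgebra K V, ∀ x ∈ I, a * x ∈ I := by
    intro a x hx
    rw [hI] at hx ⊢
    induction hx using Submodule.span_induction with
    | mem z hz =>
      obtain ⟨x', v, y', rfl⟩ := hz
      exact Submodule.subset_span ⟨a * x', v, y', by noncomm_ring⟩
    | zero => simpa using Submodule.zero_mem _
    | add u w _ _ hu hw => rw [mul_add]; exact Submodule.add_mem _ hu hw
    | smul c u _ hu => rw [mul_smul_comm]; exact Submodule.smul_mem _ c hu
  have hImulR : ∀ a : ExteriorAlgebra K V, ∀ x ∈ I, x * a ∈ I := by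
    intro a x hx
    rw [hI] at hx ⊢
    induction hx using Submodule.span_induction with
    | mem z hz =>
      obtain ⟨x', v, y', rfl⟩ := hz
      exact Submodule.subset_span ⟨x', v, y' * a, by noncomm_ring⟩
    | zero => simpa using Submodule.zero_mem _
    | add u w _ _ hu hw => rw [add_mul]; exact Submodule.add_mem _ hu hw
    | smul c u _ hu => rw [smul_mul_assoc]; exact Submodule.smul_mem _ c hu
  have hItopR : I * (⊤ : Submodule K (ExteriorAlgebra K V)) ≤ I :=
    Submodule.mul_le.2 fun x hx a _ => hImulR a x hx
  have hIpowR : ∀ b : ℕ,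
      I ^ (b + 1) * (⊤ : Submodule K (ExteriorAlgebra K V)) ≤ I ^ (b + 1) := by
    intro b
    rw [pow_succ, mul_assoc]
    exact mul_le_mul' le_rfl hItopR
  have hImono : ∀ a b : ℕ, b + 1 ≤ a → I ^ a ≤ I ^ (b + 1) := by
    intro a b hba
    have ha : a = (b + 1) + (a - (b + 1)) := by omega
    rw [ha, pow_add]
    exact le_trans (mul_le_mul' le_rfl le_top) (hIpowR b)
  -- J ≤ I
  have hJI : J ≤ I := by
    rintro x ⟨v, rfl⟩
    rw [hI]
    exact Submodule.subset_span ⟨1, v, 1, by simp⟩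
  -- φ maps powers of I into themselves
  have hφIpow : ∀ k : ℕ, Submodule.map φ.toLinearMap (I ^ k) ≤ I ^ k := by
    intro k
    rw [Submodule.map_pow]
    refine aux_powMono ?_ k
    rintro _ ⟨x, hx, rfl⟩
    exact hφI x hx
  -- I is contained in the sup of positive exterior powers
  have hiSupJ : (⊤ : Submodule K (ExteriorAlgebra K V)) = ⨆ i : ℕ, J ^ i := by
    have h := aux_iSup_top (K := K) (V := V)
    simp only [← hJpow] at h
    exact h.symm
  have hIle : I ≤ ⨆ i : ℕ, J ^ (i + 1) := by
    rw [hI, Submodule.span_le]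
    rintro z ⟨x, v, y, rfl⟩
    have hmul : ((⨆ i : ℕ, J ^ i) * J) * (⨆ i : ℕ, J ^ i) ≤ ⨆ i : ℕ, J ^ (i + 1) := by
      rw [Submodule.iSup_mul, Submodule.iSup_mul]
      refine iSup_le fun a => ?_
      rw [Submodule.mul_iSup]
      refine iSup_le fun b => ?_
      have heq : J ^ a * J * J ^ b = J ^ ((a + b) + 1) := by
        rw [← pow_succ, ← pow_add]
        ring_nf
      rw [heq]
      exact le_iSup (fun i => J ^ (i + 1)) (a + b)
    have hx : x ∈ (⨆ i : ℕ, J ^ i) := by rw [← hiSupJ]; trivial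
    have hy : y ∈ (⨆ i : ℕ, J ^ i) := by rw [← hiSupJ]; trivial
    exact hmul (Submodule.mul_mem_mul
      (Submodule.mul_mem_mul hx (LinearMap.mem_range_self _ v)) hy)
  -- powers of I lie in high exterior powers
  have hIpow_le : ∀ k : ℕ, I ^ k ≤ ⨆ i : ℕ, J ^ (i + k) := by
    intro k
    induction k with
    | zero =>
      rw [pow_zero]
      exact le_trans (le_of_eq (pow_zero J).symm) (le_iSup (fun i => J ^ (i + 0)) 0)
    | succ k ih =>
      rw [pow_succ]
      refine le_trans (mul_le_mul' ih hIle) ?_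
      rw [Submodule.iSup_mul]
      refine iSup_le fun a => ?_
      rw [Submodule.mul_iSup]
      refine iSup_le fun b => ?_
      have heq : J ^ (a + k) * J ^ (b + 1) = J ^ ((a + b) + (k + 1)) := by
        rw [← pow_add]
        ring_nf
      rw [heq]
      exact le_iSup (fun i => J ^ (i + (k + 1))) (a + b)
  -- I^(n+1) = 0
  have hInil : I ^ (n + 1) = ⊥ := by
    refine le_bot_iff.mp (le_trans (hIpow_le (n + 1)) ?_)
    refine iSup_le fun i => ?_
    rw [hJpow, aux_pow_bot' (i + (n + 1)) (by omega)]
  -- the range of φ as a submodule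
  set T : Submodule K (ExteriorAlgebra K V) := LinearMap.range φ.toLinearMap with hT
  have hone : (1 : Submodule K (ExteriorAlgebra K V)) ≤ T := by
    rw [Submodule.one_le]
    exact ⟨1, map_one φ⟩
  -- key filtration comparison
  have claimB : ∀ k : ℕ, J ^ k ≤ Submodule.map φ.toLinearMap (J ^ k) ⊔ I ^ (k + 1) := by
    intro k
    induction k with
    | zero =>
      rw [pow_zero, Submodule.one_le]
      refine Submodule.mem_sup_left ?_
      rw [show (1 : ExteriorAlgebra K V) = φ.toLinearMap 1 from (map_one φ).symm]
      exact Submodule.mem_map_of_mem (Submodule.one_le.mp le_rfl)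
    | succ k ih =>
      rw [pow_succ]
      refine Submodule.mul_le.2 fun a ha b hb => ?_
      obtain ⟨v, rfl⟩ := hb
      obtain ⟨w, rfl⟩ : ∃ w, φ₁ w = v := hbij.2 v
      obtain ⟨p, hp, c, hc, hpc⟩ := Submodule.mem_sup.mp (ih ha)
      obtain ⟨b₀, hb₀, rfl⟩ := hp
      have hdI : φ (ι K w) - ι K (φ₁ w) ∈ I * I := hφ₁ w
      have hφb₀Ik : φ.toLinearMap b₀ ∈ I ^ k :=
        hφIpow k ⟨b₀, aux_powMono hJI k hb₀, rfl⟩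
      have h1 : φ.toLinearMap (b₀ * ι K w) ∈
          Submodule.map φ.toLinearMap (J ^ (k + 1)) :=
        Submodule.mem_map_of_mem
          (by rw [pow_succ]; exact Submodule.mul_mem_mul hb₀ ⟨w, rfl⟩)
      have h2 : φ.toLinearMap b₀ * (φ (ι K w) - ι K (φ₁ w)) ∈ I ^ (k + 2) := by
        have heq : I ^ k * (I * I) = I ^ (k + 2) := by
          rw [← mul_assoc, ← pow_succ, ← pow_succ]
        rw [← heq]
        exact Submodule.mul_mem_mul hφb₀Ik hdI
      have h3 : c * ι K (φ₁ w) ∈ I ^ (k + 2) := by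
        rw [pow_succ]
        exact Submodule.mul_mem_mul hc (hJI ⟨φ₁ w, rfl⟩)
      have heq : a * ι K (φ₁ w) = φ.toLinearMap (b₀ * ι K w) +
          (c * ι K (φ₁ w) - φ.toLinearMap b₀ * (φ (ι K w) - ι K (φ₁ w))) := by
        have hm : φ.toLinearMap (b₀ * ι K w) =
            φ.toLinearMap b₀ * (φ (ι K w) - ι K (φ₁ w) + ι K (φ₁ w)) := by
          show φ (b₀ * ι K w) = φ b₀ * (φ (ι K w) - ι K (φ₁ w) + ι K (φ₁ w))
          rw [map_mul]
          noncomm_ring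
        rw [hm, ← hpc]
        noncomm_ring
      rw [heq]
      exact Submodule.add_mem _ (Submodule.mem_sup_left h1)
        (Submodule.mem_sup_right (Submodule.sub_mem _ h3 h2))
  have hmapT : ∀ A : Submodule K (ExteriorAlgebra K V),
      Submodule.map φ.toLinearMap A ≤ T := fun A => LinearMap.map_le_range
  -- downward induction
  have key : ∀ j m : ℕ, n + 1 ≤ m + j → I ^ m ≤ T := by
    intro j
    induction j with
    | zero =>
      intro m hm
      have hbot : I ^ m = ⊥ := by
        have hm' : m = (n + 1) + (m - (n + 1)) := by omega
        rw [hm', pow_add, hInil, Submodule.bot_mul]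
      rw [hbot]
      exact bot_le
    | succ j ih =>
      intro m hm
      by_cases h : n + 1 ≤ m + j
      · exact ih m h
      · match m with
        | 0 => rw [pow_zero]; exact hone
        | m' + 1 =>
          refine le_trans (hIpow_le (m' + 1)) (iSup_le fun i => ?_)
          refine le_trans (claimB (i + (m' + 1))) (sup_le (hmapT _) ?_)
          refine le_trans (hImono (i + (m' + 1) + 1) (m' + 1) (by omega)) ?_
          exact ih (m' + 2) (by omega)
  have hTtop : T = ⊤ := by
    refine le_antisymm le_top ?_
    rw [hiSupJ]
    refine iSup_le fun i =>
      le_trans (claimB i) (sup_le (hmapT _) (key n (i + 1) (by omega)))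
  have hsurj : Function.Surjective φ := LinearMap.range_eq_top.mp hTtop
  have hfd : FiniteDimensional K (ExteriorAlgebra K V) := aux_findim
  have hinj : Function.Injective φ.toLinearMap :=
    (LinearMap.injective_iff_surjective_of_finrank_eq_finrank rfl).2 hsurj
  exact ⟨hinj, hsurj⟩
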